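/- Let a and s be configurations such that (a,s) has finite queue lengths, and set d = D(a,s). Then for all integers s₀ < t, min_{ℓ ∈ [s₀,t]} ( a[s₀,ℓ−1] + s[ℓ,t−1] ) = min_{ℓ ∈ [s₀,t]} ( a[s₀,ℓ−1] + d[ℓ,t−1] ), where sums over empty index ranges equal 0. -/

import Mathlib

open scoped BigOperators

/-- A particle configuration on `ℤ`: a `{0,1}`-valued function. -/
abbrev Config := ℤ → ℤ

/-- `x` takes only the values `0` and `1`. -/
def IsConfig (x : Config) : Prop := ∀ i, x i = 0 ∨ x i = 1

/-- `x[i,j] = ∑_{k=i}^j x(k)` (zero if `j < i`). -/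
noncomputable def cnt (x : Config) (i j : ℤ) : ℤ := ∑ k ∈ Finset.Icc i j, x k

/-- `(a,s)` has finite queue lengths. -/
def FinQ (a s : Config) : Prop :=
  ∀ i : ℤ, BddAbove {v : ℤ | ∃ j ≤ i, v = cnt a j i - cnt s j i}

/-- The queue length `Q_i(a,s) = sup_{j ≤ i} max(a[j,i] - s[j,i], 0)`. -/
noncomputable def queue (a s : Config) (i : ℤ) : ℤ :=
  sSup {q : ℤ | ∃ j ≤ i, q = max (cnt a j i - cnt s j i) 0}

/-- The departure configuration `D(a,s)`. -/
noncomputable def dep (a s : Config) : Config := fun i =>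
  if s i = 1 ∧ (0 < queue a s (i - 1) ∨ a i = 1) then 1 else 0

/-- The unused-service configuration `U(a,s)`. -/
noncomputable def unusedSrv (a s : Config) : Config := fun i =>
  if s i = 1 ∧ queue a s (i - 1) = 0 ∧ a i = 0 then 1 else 0

/-- `R(a,s)(i) = a(i) + U(a,s)(i)`. -/
noncomputable def Rmap (a s : Config) : Config := fun i => a i + unusedSrv a s i

/-- Truncation: `x_{n,0}(i) = x(i)` for `i ≥ n`, `0` otherwise. -/
def trunc (x : Config) (n : ℤ) : Config := fun i => if n ≤ i then x i else 0

/-- Left-peeling tandem queue: `Dtandem x [s₁,…,s_k] = D(…D(D(x,s₁),s₂)…,s_k)`. -/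
noncomputable def Dtandem : Config → List Config → Config
  | x, [] => x
  | x, s :: rest => Dtandem (dep x s) rest

/-- `DtandemList [x₁,…,xₙ] = Dⁿ(x₁,…,xₙ)`. -/
noncomputable def DtandemList : List Config → Config
  | [] => fun _ => 0
  | x :: rest => Dtandem x rest

/-- `DtandemN x = Dⁿ(x 0, …, x (n-1))`. -/
noncomputable def DtandemN {n : ℕ} (x : Fin n → Config) : Config :=
  DtandemList (List.ofFn x)

/-- Every pair appearing as (arrivals, services) in the recursive definition of the
tandem departure map has finite queue lengths. -/
def TandemFinQ : List Config → Prop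
  | [] => True
  | [_] => True
  | x :: s :: rest => FinQ x s ∧ TandemFinQ (dep x s :: rest)
  termination_by l => l.length

section Aux

lemma cnt_empty (x : Config) {i j : ℤ} (h : j < i) : cnt x i j = 0 := by
  unfold cnt; rw [Finset.Icc_eq_empty (by omega)]; simp

lemma cnt_single (x : Config) (i : ℤ) : cnt x i i = x i := by
  unfold cnt; rw [Finset.Icc_self, Finset.sum_singleton]

lemma cnt_split (x : Config) {i k j : ℤ} (h1 : i ≤ k) (h2 : k ≤ j + 1) :
    cnt x i j = cnt x i (k - 1) + cnt x k j := by
  unfold cnt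
  rw [← Finset.sum_union]
  · congr 1
    ext m
    simp only [Finset.mem_union, Finset.mem_Icc]
    omega
  · rw [Finset.disjoint_left]
    intro m hm hm'
    simp only [Finset.mem_Icc] at hm hm'
    omega

variable {a s : Config}

lemma qset_nonempty (a s : Config) (i : ℤ) :
    {q : ℤ | ∃ j ≤ i, q = max (cnt a j i - cnt s j i) 0}.Nonempty :=
  ⟨max (cnt a i i - cnt s i i) 0, i, le_refl i, rfl⟩

lemma qset_bdd (hfq : FinQ a s) (i : ℤ) :
    BddAbove {q : ℤ | ∃ j ≤ i, q = max (cnt a j i - cnt s j i) 0} := by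
  obtain ⟨M, hM⟩ := hfq i
  refine ⟨max M 0, ?_⟩
  rintro q ⟨j, hj, rfl⟩
  have : cnt a j i - cnt s j i ≤ M := hM ⟨j, hj, rfl⟩
  omega

lemma queue_mem (hfq : FinQ a s) (i : ℤ) :
    ∃ j ≤ i, queue a s i = max (cnt a j i - cnt s j i) 0 :=
  Int.csSup_mem (qset_nonempty a s i) (qset_bdd hfq i)

lemma queue_ge (hfq : FinQ a s) {i j : ℤ} (hj : j ≤ i) :
    cnt a j i - cnt s j i ≤ queue a s i :=
  le_trans (le_max_left _ _) (le_csSup (qset_bdd hfq i) ⟨j, hj, rfl⟩)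

lemma queue_nonneg (hfq : FinQ a s) (i : ℤ) : 0 ≤ queue a s i :=
  le_trans (le_max_right _ _) (le_csSup (qset_bdd hfq i) ⟨i, le_refl i, rfl⟩)

lemma lindley (hfq : FinQ a s) (i : ℤ) :
    queue a s i = max (queue a s (i - 1) + a i - s i) 0 := by
  have h0 := queue_nonneg hfq (i - 1)
  have h0' := queue_nonneg hfq i
  apply le_antisymm
  · obtain ⟨j, hj, hq⟩ := queue_mem hfq i
    rcases lt_or_ge j i with hji | hji
    · have hsa : cnt a j i = cnt a j (i - 1) + a i := by
        rw [cnt_split a (show j ≤ i from hji.le) (by omega), cnt_single]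
      have hss : cnt s j i = cnt s j (i - 1) + s i := by
        rw [cnt_split s (show j ≤ i from hji.le) (by omega), cnt_single]
      have h2 : cnt a j (i - 1) - cnt s j (i - 1) ≤ queue a s (i - 1) :=
        queue_ge hfq (by omega)
      omega
    · have hji' : j = i := le_antisymm hj hji
      subst hji'
      rw [cnt_single, cnt_single] at hq
      omega
  · obtain ⟨j, hj, hq⟩ := queue_mem hfq (i - 1)
    have key : max (queue a s (i - 1) + a i - s i) 0 ≤ queue a s i := by
      rcases le_or_gt (cnt a j (i - 1) - cnt s j (i - 1)) 0 with hc | hc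
      · have hQ0 : queue a s (i - 1) = 0 := by omega
        have := queue_ge hfq (le_refl i)
        rw [cnt_single, cnt_single] at this
        omega
      · have hQv : queue a s (i - 1) = cnt a j (i - 1) - cnt s j (i - 1) := by omega
        have hsa : cnt a j i = cnt a j (i - 1) + a i := by
          rw [cnt_split a (show j ≤ i by omega) (by omega), cnt_single]
        have hss : cnt s j i = cnt s j (i - 1) + s i := by
          rw [cnt_split s (show j ≤ i by omega) (by omega), cnt_single]
        have := queue_ge hfq (show j ≤ i by omega)
        omega
    exact key

lemma dep_eq (ha : IsConfig a) (hs : IsConfig s) (hfq : FinQ a s) (i : ℤ) :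
    dep a s i = a i + queue a s (i - 1) - queue a s i := by
  have hl := lindley hfq i
  have h0 := queue_nonneg hfq (i - 1)
  have ha' := ha i
  have hs' := hs i
  unfold dep
  split_ifs with h <;> omega

lemma telescope (f : ℤ → ℤ) (l : ℤ) :
    ∀ m, l - 1 ≤ m → (∑ i ∈ Finset.Icc l m, (f (i - 1) - f i)) = f (l - 1) - f m := by
  refine Int.le_induction ?_ ?_
  · rw [Finset.Icc_eq_empty (by omega)]; simp
  · intro n hn ih
    have hins : Finset.Icc l (n + 1) = insert (n + 1) (Finset.Icc l n) := by
      ext m; simp only [Finset.mem_insert, Finset.mem_Icc]; omega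
    rw [hins, Finset.sum_insert (by simp), ih]
    have : (n + 1 : ℤ) - 1 = n := by ring
    rw [this]; ring

lemma cnt_dep (ha : IsConfig a) (hs : IsConfig s) (hfq : FinQ a s) {l m : ℤ}
    (h : l - 1 ≤ m) :
    cnt (dep a s) l m = cnt a l m + queue a s (l - 1) - queue a s m := by
  have hc : ∀ i ∈ Finset.Icc l m, dep a s i
      = a i + (queue a s (i - 1) - queue a s i) := fun i _ => by
    have := dep_eq ha hs hfq i; omega
  unfold cnt
  rw [Finset.sum_congr rfl hc, Finset.sum_add_distrib, telescope (queue a s) l m h]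
  ring

lemma dep_le (hs : IsConfig s) (i : ℤ) : dep a s i ≤ s i := by
  have := hs i
  unfold dep
  split_ifs with h <;> omega

end Aux

/-- With `d = D(a,s)`, for all `s₀ < t`,
`min_{ℓ ∈ [s₀,t]} (a[s₀,ℓ−1] + s[ℓ,t−1]) = min_{ℓ ∈ [s₀,t]} (a[s₀,ℓ−1] + d[ℓ,t−1])`. -/
theorem stmt10 (a s : Config) (ha : IsConfig a) (hs : IsConfig s) (hfq : FinQ a s) :
    ∀ s₀ t : ℤ, ∀ hst : s₀ < t,
      (Finset.Icc s₀ t).inf' (Finset.nonempty_Icc.mpr hst.le)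
          (fun l => cnt a s₀ (l - 1) + cnt s l (t - 1))
        = (Finset.Icc s₀ t).inf' (Finset.nonempty_Icc.mpr hst.le)
          (fun l => cnt a s₀ (l - 1) + cnt (dep a s) l (t - 1)) := by
  intro s₀ t hst
  apply le_antisymm
  · apply Finset.le_inf'
    intro l hl
    rw [Finset.mem_Icc] at hl
    have hdl : cnt (dep a s) l (t - 1)
        = cnt a l (t - 1) + queue a s (l - 1) - queue a s (t - 1) :=
      cnt_dep ha hs hfq (by omega)
    have hQl := queue_nonneg hfq (l - 1)
    obtain ⟨j, hj, hq⟩ := queue_mem hfq (t - 1)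
    rcases le_or_gt (cnt a j (t - 1) - cnt s j (t - 1)) 0 with hc | hc
    · have hQ0 : queue a s (t - 1) = 0 := by omega
      have h1 := Finset.inf'_le (s := Finset.Icc s₀ t)
        (f := fun l => cnt a s₀ (l - 1) + cnt s l (t - 1))
        (Finset.mem_Icc.mpr ⟨hst.le, le_refl t⟩)
      have he : cnt s t (t - 1) = 0 := cnt_empty s (by omega)
      have hsplit : cnt a s₀ (t - 1) = cnt a s₀ (l - 1) + cnt a l (t - 1) :=
        cnt_split a hl.1 (by omega)
      omega
    · have hQv : queue a s (t - 1) = cnt a j (t - 1) - cnt s j (t - 1) := by omega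
      rcases le_or_gt l j with hlj | hlj
      · have h1 := Finset.inf'_le (s := Finset.Icc s₀ t)
          (f := fun l => cnt a s₀ (l - 1) + cnt s l (t - 1))
          (Finset.mem_Icc.mpr (show s₀ ≤ j ∧ j ≤ t by omega))
        have hsplit : cnt a s₀ (t - 1) = cnt a s₀ (j - 1) + cnt a j (t - 1) :=
          cnt_split a (by omega) (by omega)
        have hsplit2 : cnt a s₀ (t - 1) = cnt a s₀ (l - 1) + cnt a l (t - 1) :=
          cnt_split a hl.1 (by omega)
        omega
      · have h1 := Finset.inf'_le (s := Finset.Icc s₀ t)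
          (f := fun l => cnt a s₀ (l - 1) + cnt s l (t - 1))
          (Finset.mem_Icc.mpr hl)
        have hsa : cnt a j (t - 1) = cnt a j (l - 1) + cnt a l (t - 1) :=
          cnt_split a (by omega) (by omega)
        have hss : cnt s j (t - 1) = cnt s j (l - 1) + cnt s l (t - 1) :=
          cnt_split s (by omega) (by omega)
        have hQl' : cnt a j (l - 1) - cnt s j (l - 1) ≤ queue a s (l - 1) :=
          queue_ge hfq (by omega)
        omega
  · apply Finset.le_inf'
    intro l hl
    refine le_trans (Finset.inf'_le _ hl) ?_
    have hmono : cnt (dep a s) l (t - 1) ≤ cnt s l (t - 1) :=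
      Finset.sum_le_sum fun i _ => dep_le hs i
    omega
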